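/- If A is a commutative ring that is finitely generated as a Z-algebra, and q is a maximal ideal of A, then q ∩ Z is a nonzero prime ideal of Z; i.e., the residue field A/q has positive characteristic. -/

import Mathlib

theorem int_isJacobsonRing : IsJacobsonRing ℤ := by
  rw [isJacobsonRing_iff_prime_eq]
  intro P hP
  by_cases hbot : P = ⊥
  · subst hbot
    refine le_antisymm ?_ Ideal.le_jacobson
    intro x hx
    have h1 := Ideal.mem_jacobson_bot.mp hx 1
    have h2 := Ideal.mem_jacobson_bot.mp hx (-1)
    rw [Int.isUnit_iff] at h1 h2
    have : x = 0 := by omega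
    simp [this]
  · haveI := hP
    exact Ideal.jacobson_eq_self_of_isMaximal (H := IsPrime.to_maximal_ideal hbot)

/-- If `A` is a finitely generated `ℤ`-algebra and `q` a maximal ideal of `A`,
then the contraction `q ∩ ℤ` is a nonzero prime of `ℤ`; equivalently the residue
field `A/q` has positive characteristic. -/
theorem stmt3 (A : Type*) [CommRing A] [Algebra.FiniteType ℤ A]
    (q : Ideal A) (hq : q.IsMaximal) :
    q.comap (algebraMap ℤ A) ≠ ⊥ ∧ (q.comap (algebraMap ℤ A)).IsPrime ∧
      0 < ringChar (A ⧸ q) := by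
  haveI := int_isJacobsonRing
  letI : Field (A ⧸ q) := Ideal.Quotient.field q
  haveI : Algebra.FiniteType ℤ (A ⧸ q) :=
    Algebra.FiniteType.of_surjective (Ideal.Quotient.mkₐ ℤ q)
      (Ideal.Quotient.mkₐ_surjective ℤ q)
  haveI hfin : Module.Finite ℤ (A ⧸ q) := finite_of_finite_type_of_isJacobsonRing ℤ _
  haveI hint : Algebra.IsIntegral ℤ (A ⧸ q) := Algebra.IsIntegral.of_finite ℤ _
  have hker : RingHom.ker ((Ideal.Quotient.mk q).comp (algebraMap ℤ A)) =
      q.comap (algebraMap ℤ A) := by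
    rw [← RingHom.comap_ker, Ideal.mk_ker]
  have hmapeq : (Ideal.Quotient.mk q).comp (algebraMap ℤ A) = algebraMap ℤ (A ⧸ q) :=
    Subsingleton.elim _ _
  have hne : q.comap (algebraMap ℤ A) ≠ ⊥ := by
    intro h
    have hinj : Function.Injective (algebraMap ℤ (A ⧸ q)) := by
      rw [← hmapeq]
      exact (RingHom.injective_iff_ker_eq_bot _).mpr (by rw [hker, h])
    haveI : CharZero (A ⧸ q) := charZero_of_injective_algebraMap hinj
    have h2 : IsIntegral ℤ ((algebraMap ℚ (A ⧸ q)) (1/2 : ℚ)) :=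
      Algebra.IsIntegral.isIntegral _
    have h3 : IsIntegral ℤ (1/2 : ℚ) :=
      (isIntegral_algHom_iff (algebraMap ℚ (A ⧸ q)).toIntAlgHom
        (algebraMap ℚ (A ⧸ q)).injective).mp h2
    obtain ⟨y, hy⟩ := IsIntegrallyClosed.isIntegral_iff.mp h3
    have hy' : (y : ℚ) = 1/2 := hy
    have h4 : (2 : ℚ) * y = 1 := by rw [hy']; norm_num
    have h5 : (2 : ℤ) * y = 1 := by exact_mod_cast h4
    omega
  refine ⟨hne, Ideal.IsPrime.comap _, ?_⟩
  rcases Nat.eq_zero_or_pos (ringChar (A ⧸ q)) with h0 | h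
  · exfalso
    haveI : CharP (A ⧸ q) 0 := h0 ▸ ringChar.charP (A ⧸ q)
    haveI : CharZero (A ⧸ q) := CharP.charP_to_charZero _
    apply hne
    rw [← hker]
    refine (RingHom.injective_iff_ker_eq_bot _).mp ?_
    rw [hmapeq]
    exact (algebraMap ℤ (A ⧸ q)).injective_int
  · exact h
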